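/- An infinite, finitely generated simple group admits no nontrivial finite-dimensional linear representation over any field: if G is an infinite simple group that is finitely generated, then every group homomorphism G → GL_n(k) (k a field, n a natural number) is trivial. -/

import Mathlib

lemma intJacobson : IsJacobsonRing ℤ := by
  rw [isJacobsonRing_iff_prime_eq]
  intro P hP
  rcases eq_or_ne P ⊥ with rfl | hPne
  · refine le_antisymm ?_ Ideal.le_jacobson
    intro x hx
    rw [Ideal.mem_bot]
    by_contra hx0
    obtain ⟨q, hq_le, hq⟩ := Nat.exists_infinite_primes (x.natAbs + 1)
    have hmax : (Ideal.span {(q : ℤ)}).IsMaximal := by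
      have : Prime (q : ℤ) := Int.prime_iff_natAbs_prime.mpr (by simpa using hq)
      exact PrincipalIdealRing.isMaximal_of_irreducible this.irreducible
    have hxq : x ∈ Ideal.span {(q : ℤ)} := by
      rw [Ideal.jacobson, Ideal.mem_sInf] at hx
      exact hx ⟨bot_le, hmax⟩
    rw [Ideal.mem_span_singleton] at hxq
    have h1 : (q:ℤ) ≤ |x| := Int.le_of_dvd (abs_pos.mpr hx0) ((dvd_abs _ _).mpr hxq)
    have h2 : |x| = x.natAbs := Int.abs_eq_natAbs x
    omega
  · haveI := IsPrime.to_maximal_ideal hPne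
    exact Ideal.jacobson_eq_self_of_isMaximal

lemma fieldFinite (F : Type*) [Field F] [Algebra.FiniteType ℤ F] : Finite F := by
  haveI := intJacobson
  haveI : Module.Finite ℤ F := finite_of_finite_type_of_isJacobsonRing ℤ F
  obtain ⟨p, hp⟩ := CharP.exists F
  rcases CharP.char_is_prime_or_zero F p with hpp | rfl
  · have ht : Module.IsTorsion ℤ F := by
      intro x
      refine ⟨⟨(p : ℤ), mem_nonZeroDivisors_of_ne_zero (by exact_mod_cast hpp.ne_zero)⟩, ?_⟩
      have h0 : ((p : ℤ) : F) = 0 := by exact_mod_cast (CharP.cast_eq_zero F p)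
      simp [zsmul_eq_mul, h0]
    exact Module.finite_of_fg_torsion F ht
  · haveI : CharZero F := CharP.charP_to_charZero F
    haveI : Algebra.IsIntegral ℤ F := Algebra.IsIntegral.of_finite ℤ F
    exfalso
    have hint : IsIntegral ℤ (algebraMap ℚ F (1/2)) := Algebra.IsIntegral.isIntegral _
    have h2 : IsIntegral ℤ ((1:ℚ)/2) :=
      IsIntegral.tower_bot (algebraMap ℚ F).injective (by exact_mod_cast hint)
    obtain ⟨y, hy⟩ := IsIntegrallyClosed.isIntegral_iff.mp h2
    have hq : (2 : ℚ) * (y : ℚ) = 1 := by rw [show ((y:ℤ):ℚ) = (1:ℚ)/2 from hy]; ring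
    have : (2 * y : ℤ) = 1 := by exact_mod_cast hq
    omega

lemma quotFinite {A : Type*} [CommRing A] [ft : Algebra.FiniteType ℤ A] (m : Ideal A)
    [m.IsMaximal] : Finite (A ⧸ m) := by
  letI : Field (A ⧸ m) := Ideal.Quotient.field m
  haveI : Algebra.FiniteType ℤ (A ⧸ m) :=
    Algebra.FiniteType.of_surjective (Ideal.Quotient.mkₐ ℤ m)
      (Ideal.Quotient.mkₐ_surjective ℤ m)
  exact @fieldFinite (A ⧸ m) _ (by convert this; rfl; exact Subsingleton.elim _ _)


universe uA uG

set_option maxHeartbeats 1000000 in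
/-- Mal'cev-style reduction: a matrix representation over a f.g. domain admits, for any
`g` with nonidentity image, a reduction to a finite group where `g` survives. -/
lemma reduction {A : Type uA} [CommRing A] [IsDomain A] [Algebra.FiniteType ℤ A] {n : ℕ}
    {G : Type uG} [Group G] (M : G → Matrix (Fin n) (Fin n) A)
    (hMmul : ∀ x y : G, M (x * y) = M x * M y) (hMone : M 1 = 1)
    (g : G) (hMg : M g ≠ 1) :
    ∃ (Q : Type uA) (_ : Group Q) (_ : Finite Q) (ψ : G →* Q), ψ g ≠ 1 := by
  classical
  have hMright : ∀ x : G, M x * M x⁻¹ = 1 := fun x => by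
    rw [← hMmul, mul_inv_cancel, hMone]
  have hMleft : ∀ x : G, M x⁻¹ * M x = 1 := fun x => by
    rw [← hMmul, inv_mul_cancel, hMone]
  obtain ⟨i, j, hij⟩ : ∃ i j, M g i j ≠ (1 : Matrix (Fin n) (Fin n) A) i j := by
    by_contra h
    push_neg at h
    exact hMg (by ext i j; exact h i j)
  set a : A := M g i j - (1 : Matrix (Fin n) (Fin n) A) i j with hadef
  have ha0 : a ≠ 0 := sub_ne_zero_of_ne hij
  haveI := intJacobson
  haveI : IsJacobsonRing A := isJacobsonRing_of_finiteType (A := ℤ) (B := A)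
  have hjac : (⊥ : Ideal A).jacobson = ⊥ :=
    (inferInstance : IsJacobsonRing A).out (Ideal.bot_prime.isRadical)
  have hnm : a ∉ (⊥ : Ideal A).jacobson := by
    rw [hjac, Ideal.mem_bot]; exact ha0
  rw [Ideal.jacobson, Ideal.mem_sInf] at hnm
  push_neg at hnm
  obtain ⟨m, ⟨-, hm⟩, ham⟩ := hnm
  haveI : m.IsMaximal := hm
  haveI : Finite (A ⧸ m) := quotFinite m
  let π : A →+* A ⧸ m := Ideal.Quotient.mk m
  let Pm : Matrix (Fin n) (Fin n) A →+* Matrix (Fin n) (Fin n) (A ⧸ m) := π.mapMatrix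
  let ψ0 : G → (Matrix (Fin n) (Fin n) (A ⧸ m))ˣ := fun x =>
    ⟨Pm (M x), Pm (M x⁻¹),
      by rw [← map_mul, hMright x, map_one],
      by rw [← map_mul, hMleft x, map_one]⟩
  have hψmul : ∀ x y, ψ0 (x * y) = ψ0 x * ψ0 y := fun x y =>
    Units.ext (by show Pm (M (x*y)) = Pm (M x) * Pm (M y); rw [hMmul, map_mul])
  refine ⟨(Matrix (Fin n) (Fin n) (A ⧸ m))ˣ, inferInstance, inferInstance,
    MonoidHom.mk' ψ0 hψmul, ?_⟩
  intro h
  apply ham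
  have h1 : Pm (M g) = 1 := congrArg Units.val h
  have h2 : π (M g i j) = π ((1 : Matrix (Fin n) (Fin n) A) i j) := by
    have e1 : π (M g i j) = (Pm (M g)) i j := rfl
    have e2 : π ((1 : Matrix (Fin n) (Fin n) A) i j)
        = (1 : Matrix (Fin n) (Fin n) (A ⧸ m)) i j := by
      by_cases h' : i = j <;> simp [Matrix.one_apply, h']
    rw [e1, e2, h1]
  have h3 : π a = 0 := by rw [hadef, map_sub, h2, sub_self]
  exact Ideal.Quotient.eq_zero_iff_mem.mp h3

set_option maxHeartbeats 1000000 in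
/-- The entries of the image of a finitely generated group lie in a finitely generated
ℤ-subalgebra of `k`. -/
lemma entries_fg {k : Type*} [Field k] {n : ℕ} {G : Type*} [Group G]
    (φ : G →* GL (Fin n) k) (S : Finset G) (hS : Subgroup.closure (S : Set G) = ⊤) :
    ∃ A : Subalgebra ℤ k, Algebra.FiniteType ℤ A ∧
      ∀ x : G, ∀ i j, ((φ x : GL (Fin n) k) : Matrix (Fin n) (Fin n) k) i j ∈ A := by
  classical
  set E : Set k := ⋃ x ∈ (S : Set G),
      (Set.range fun p : Fin n × Fin n =>
        ((φ x : GL (Fin n) k) : Matrix (Fin n) (Fin n) k) p.1 p.2) ∪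
      (Set.range fun p : Fin n × Fin n =>
        (((φ x)⁻¹ : GL (Fin n) k) : Matrix (Fin n) (Fin n) k) p.1 p.2) with hEdef
  have hEfin : E.Finite :=
    Set.Finite.biUnion S.finite_toSet
      (fun x _ => (Set.finite_range _).union (Set.finite_range _))
  refine ⟨Algebra.adjoin ℤ E, ?_, ?_⟩
  · rw [← Subalgebra.fg_iff_finiteType]
    have := Subalgebra.fg_adjoin_finset (R := ℤ) hEfin.toFinset
    rwa [hEfin.coe_toFinset] at this
  set A : Subalgebra ℤ k := Algebra.adjoin ℤ E with hAdef
  let H : Subgroup (GL (Fin n) k) :=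
    { carrier := { x | (∀ i j, ((x : GL (Fin n) k) : Matrix (Fin n) (Fin n) k) i j ∈ A) ∧
        (∀ i j, ((x⁻¹ : GL (Fin n) k) : Matrix (Fin n) (Fin n) k) i j ∈ A) }
      one_mem' := by
        have h1 : ∀ i j : Fin n, ((1 : GL (Fin n) k) : Matrix (Fin n) (Fin n) k) i j ∈ A := by
          intro i j
          rw [Units.val_one, Matrix.one_apply]
          split_ifs
          exacts [A.one_mem, A.zero_mem]
        exact ⟨h1, by simpa using h1⟩
      mul_mem' := by
        rintro x y ⟨hx, hx'⟩ ⟨hy, hy'⟩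
        refine ⟨fun i j => ?_, fun i j => ?_⟩
        · rw [Units.val_mul, Matrix.mul_apply]
          exact A.sum_mem fun l _ => A.mul_mem (hx i l) (hy l j)
        · rw [mul_inv_rev, Units.val_mul, Matrix.mul_apply]
          exact A.sum_mem fun l _ => A.mul_mem (hy' i l) (hx' l j)
      inv_mem' := by
        rintro x ⟨hx, hx'⟩
        exact ⟨hx', by simpa using hx⟩ }
  have hle : Subgroup.closure (S : Set G) ≤ Subgroup.comap φ H := by
    rw [Subgroup.closure_le]
    intro s hs
    refine ⟨fun i j => Algebra.subset_adjoin ?_, fun i j => Algebra.subset_adjoin ?_⟩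
    · exact Set.mem_biUnion hs (Or.inl ⟨(i, j), rfl⟩)
    · exact Set.mem_biUnion hs (Or.inr ⟨(i, j), rfl⟩)
  intro x
  have hx : x ∈ Subgroup.closure (S : Set G) := hS ▸ Subgroup.mem_top x
  exact (hle hx).1

set_option maxHeartbeats 1000000 in
/-- An infinite, finitely generated simple group admits no nontrivial
finite-dimensional linear representation over any field. -/
theorem stmt7 (G : Type*) [Group G] [IsSimpleGroup G] [Infinite G] (hfg : Group.FG G)
    (k : Type*) [Field k] (n : ℕ) (φ : G →* GL (Fin n) k) :
    ∀ g : G, φ g = 1 := by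
  classical
  intro g
  by_contra hg
  obtain ⟨S, hS⟩ := hfg.out
  obtain ⟨A, hAft, key⟩ := entries_fg φ S hS
  let M : G → Matrix (Fin n) (Fin n) A := fun x i j => ⟨(φ x).val i j, key x i j⟩
  have hcoe : ∀ (x : G) (i j : Fin n), ((M x i j : A) : k) = (φ x).val i j := fun _ _ _ => rfl
  have hMmul : ∀ x y : G, M (x * y) = M x * M y := by
    intro x y
    ext i j
    show ((M (x*y)) i j : k) = ((M x * M y) i j : k)
    have h2 : ((M x * M y) i j : k) = ∑ l, (φ x).val i l * (φ y).val l j := by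
      rw [Matrix.mul_apply]; simp [M]
    rw [h2, hcoe, map_mul, Units.val_mul, Matrix.mul_apply]
  have hMone : M 1 = 1 := by
    ext i j
    show ((M 1) i j : k) = ((1 : Matrix (Fin n) (Fin n) A) i j : k)
    have h1 : ((1 : Matrix (Fin n) (Fin n) A) i j : k) = (1 : Matrix (Fin n) (Fin n) k) i j := by
      by_cases h : i = j <;> simp [Matrix.one_apply, h]
    rw [h1, hcoe, map_one, Units.val_one]
  have hMg : M g ≠ 1 := by
    intro h
    apply hg
    refine Units.ext ?_
    rw [Units.val_one]
    ext i j
    have := congrArg (fun X : Matrix (Fin n) (Fin n) A => ((X i j : A) : k)) h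
    simp only [hcoe] at this
    rw [this]
    by_cases h' : i = j <;> simp [Matrix.one_apply, h']
  obtain ⟨Q, _, _, ψ, hψg⟩ := reduction M hMmul hMone g hMg
  have hker : ψ.ker = ⊥ := by
    rcases Subgroup.Normal.eq_bot_or_eq_top (MonoidHom.normal_ker ψ) with h | h
    · exact h
    · exact absurd (h ▸ Subgroup.mem_top g : g ∈ ψ.ker) hψg
  have hψinj : Function.Injective ψ := (MonoidHom.ker_eq_bot_iff ψ).mp hker
  haveI : Finite G := Finite.of_injective ψ hψinj
  exact not_finite G
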